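/- Let k ≥ 2 be an integer, let p₁, p_k be real numbers with 0 < p₁ < p_k < k·p₁, let A, L_c be real numbers and L > 0, and let U : ℝ → ℝ be differentiable with U'(x) > 0 for all x and with U' strictly antitone on ℝ. Define H^k(t) = p₁·U(A − p_k·L_c − L − (k−1)·t + L_c) + (p_k − p₁)·U(A − p_k·L_c − L + t + L_c) + (1 − p_k)·U(A − p_k·L_c). Then H^k is strictly antitone on the interval [0, L]; in particular, t = 0 is the unique maximizer of H^k over [0, L]. -/

import Mathlib

/-- Scenario B (Proposition 3): a participating provider's expected utility `Hᵏ` is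
strictly decreasing in the fine `t` on `[0, L]`; in particular `t = 0` is the unique
maximizer of `Hᵏ` over `[0, L]`. -/
theorem scenarioB_optimal_fine_zero
    (k : ℕ) (hk : 2 ≤ k) (p₁ pk A Lc L : ℝ) (hL : 0 < L)
    (hp₁ : 0 < p₁) (hp₁k : p₁ < pk) (hpk : pk < (k : ℝ) * p₁)
    (U : ℝ → ℝ) (hUdiff : Differentiable ℝ U)
    (hU' : ∀ x : ℝ, 0 < deriv U x) (hU'anti : StrictAnti (deriv U))
    (Hk : ℝ → ℝ)
    (hHk : ∀ t : ℝ, Hk t =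
      p₁ * U (A - pk * Lc - L - ((k : ℝ) - 1) * t + Lc) +
      (pk - p₁) * U (A - pk * Lc - L + t + Lc) +
      (1 - pk) * U (A - pk * Lc)) :
    StrictAntiOn Hk (Set.Icc 0 L) ∧
    IsMaxOn Hk (Set.Icc 0 L) 0 ∧
    ∀ t ∈ Set.Icc (0 : ℝ) L, IsMaxOn Hk (Set.Icc 0 L) t → t = 0 := by
  have hkR : (2 : ℝ) ≤ (k : ℝ) := by exact_mod_cast hk
  have hk1 : (1 : ℝ) ≤ (k : ℝ) - 1 := by linarith
  have hHkfun : Hk = fun t : ℝ =>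
      p₁ * U (A - pk * Lc - L - ((k : ℝ) - 1) * t + Lc) +
      (pk - p₁) * U (A - pk * Lc - L + t + Lc) +
      (1 - pk) * U (A - pk * Lc) := funext hHk
  -- derivative of Hk at any point
  have hderiv : ∀ t : ℝ, HasDerivAt Hk
      (p₁ * (deriv U (A - pk * Lc - L - ((k : ℝ) - 1) * t + Lc) * (-((k : ℝ) - 1))) +
       (pk - p₁) * (deriv U (A - pk * Lc - L + t + Lc))) t := by
    intro t
    have h1 : HasDerivAt (fun t : ℝ => A - pk * Lc - L - ((k : ℝ) - 1) * t + Lc)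
        (-((k : ℝ) - 1)) t := by
      have := ((hasDerivAt_id t).const_mul (((k : ℝ) - 1))).const_sub (A - pk * Lc - L)
      simpa using this.add_const Lc
    have h2 : HasDerivAt (fun t : ℝ => A - pk * Lc - L + t + Lc) 1 t := by
      have := ((hasDerivAt_id t).const_add (A - pk * Lc - L)).add_const Lc
      simpa using this
    have hU1 := ((hUdiff _).hasDerivAt.comp t h1).const_mul p₁
    have hU2 := ((hUdiff _).hasDerivAt.comp t h2).const_mul (pk - p₁)
    have := (hU1.add hU2).add_const ((1 - pk) * U (A - pk * Lc))
    rw [hHkfun]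
    exact this.congr_deriv (by ring)
  -- the derivative is negative for t ≥ 0
  have hneg : ∀ t : ℝ, 0 ≤ t →
      p₁ * (deriv U (A - pk * Lc - L - ((k : ℝ) - 1) * t + Lc) * (-((k : ℝ) - 1))) +
      (pk - p₁) * (deriv U (A - pk * Lc - L + t + Lc)) < 0 := by
    intro t ht
    set x₁ := A - pk * Lc - L - ((k : ℝ) - 1) * t + Lc
    set x₂ := A - pk * Lc - L + t + Lc
    have hx : x₁ ≤ x₂ := by
      have : ((k : ℝ) - 1) * t ≥ -t := by nlinarith
      simp only [x₁, x₂]; linarith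
    have hUx : deriv U x₂ ≤ deriv U x₁ := hU'anti.antitone hx
    have h1 := hU' x₁
    have h2 := hU' x₂
    nlinarith [mul_pos hp₁ h1]
  have hanti : StrictAntiOn Hk (Set.Icc 0 L) := by
    apply strictAntiOn_of_deriv_neg (convex_Icc 0 L)
    · exact fun t _ => ((hderiv t).differentiableAt).continuousAt.continuousWithinAt
    · intro t ht
      rw [interior_Icc] at ht
      rw [(hderiv t).deriv]
      exact hneg t ht.1.le
  refine ⟨hanti, ?_, ?_⟩
  · intro t ht
    rcases eq_or_lt_of_le ht.1 with h | h
    · simp [← h]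
    · exact (hanti (Set.left_mem_Icc.2 hL.le) ht h).le
  · intro t ht hmax
    by_contra h
    have h0 : 0 < t := lt_of_le_of_ne ht.1 (Ne.symm h)
    have := hanti (Set.left_mem_Icc.2 hL.le) ht h0
    have := hmax (Set.left_mem_Icc.2 hL.le)
    simp only [Set.mem_setOf_eq] at this
    linarith [hmax (Set.left_mem_Icc.2 hL.le)]
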